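/- Let Z₁, …, Z_n be i.i.d. random variables with common distribution G on a measurable space 𝒵, let ξ : 𝒵 → ℝ be measurable with mean m := E_G[ξ] and variance σ² := Var_G(ξ) ∈ (0,∞), and let Δ := sup_{t ∈ ℝ} |P((∑ᵢ ξ(Zᵢ) − n·m)/(√n·σ) ≤ t) − Φ(t)|. Let σ̂ ≥ 0 and B be random variables defined on the same probability space, and let z ≥ 0, η ≥ 0, γ ≥ 0 be real numbers. Then |P(∑_{i=1}^n ξ(Zᵢ) + n·B > √n·z·σ̂) − (1 − Φ(z))| ≤ Δ + P(|σ̂ − σ| > η·σ) + P(√n·|B + m| > γ·σ) + (η·z + γ)/√(2π). -/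

import Mathlib

open MeasureTheory Real ProbabilityTheory

/-- The standard normal cumulative distribution function. -/
noncomputable def Phi (t : ℝ) : ℝ :=
  (Real.sqrt (2 * Real.pi))⁻¹ * ∫ x in Set.Iic t, Real.exp (-x ^ 2 / 2)

lemma gauss_integrable' : Integrable (fun x : ℝ => Real.exp (-x ^ 2 / 2)) := by
  have h := integrable_exp_neg_mul_sq (by norm_num : (0:ℝ) < 1/2)
  refine h.congr (Filter.Eventually.of_forall fun x => ?_)
  ring_nf

lemma Phi_lipschitz' {a b : ℝ} (hab : a ≤ b) :
    Phi b - Phi a ≤ (b - a) / Real.sqrt (2 * Real.pi) := by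
  have hπ : 0 < Real.sqrt (2 * Real.pi) := Real.sqrt_pos.mpr (by positivity)
  have hint := gauss_integrable'
  have hsub : (∫ x in Set.Iic b, Real.exp (-x ^ 2 / 2))
      - ∫ x in Set.Iic a, Real.exp (-x ^ 2 / 2)
      = ∫ x in a..b, Real.exp (-x ^ 2 / 2) :=
    intervalIntegral.integral_Iic_sub_Iic hint.integrableOn hint.integrableOn
  have hle : (∫ x in a..b, Real.exp (-x ^ 2 / 2)) ≤ b - a := by
    calc (∫ x in a..b, Real.exp (-x ^ 2 / 2)) ≤ ∫ _x in a..b, (1:ℝ) := by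
          apply intervalIntegral.integral_mono_on hab hint.intervalIntegrable
            intervalIntegrable_const
          intro x _
          rw [show -x ^ 2 / 2 = -(x ^ 2 / 2) by ring]
          exact Real.exp_le_one_iff.mpr (neg_nonpos.mpr (by positivity))
      _ = b - a := by simp
  have heq : Phi b - Phi a
      = (Real.sqrt (2 * Real.pi))⁻¹ * ∫ x in a..b, Real.exp (-x ^ 2 / 2) := by
    rw [Phi, Phi, ← mul_sub, hsub]
  rw [heq, div_eq_inv_mul]
  exact mul_le_mul_of_nonneg_left hle (by positivity)

/-- Nonasymptotic conditional form underlying Theorem 2: the miscoverage probability of the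
studentized and bias-corrected universal confidence set equals `1 − Φ(z)` up to the
Berry–Esseen error `Δ`, the studentization error probability, the double-robustness term
`P(√n|B + m| > γσ)`, and Gaussian-Lipschitz remainders. The i.i.d. sample `Z₁,…,Z_n ∼ G` is
modelled by the product measure `Measure.pi (fun _ : Fin n => G)`. -/
theorem bias_corrected_universal_inference_miscoverage_nonasymptotic
    {𝒵 : Type*} [MeasurableSpace 𝒵] (G : Measure 𝒵) [IsProbabilityMeasure G]
    (n : ℕ) (hn : 0 < n)
    (ξ : 𝒵 → ℝ) (hξ : Measurable ξ)
    (m σ : ℝ) (hm : m = ∫ z, ξ z ∂G)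
    (hξ2 : Integrable (fun z => (ξ z) ^ 2) G)
    (hσ : σ ^ 2 = variance ξ G) (hσpos : 0 < σ)
    (Δ : ℝ)
    (hΔ : ∀ t : ℝ, |((Measure.pi fun _ : Fin n => G)
        {ω | ((∑ i, ξ (ω i)) - n * m) / (Real.sqrt n * σ) ≤ t}).toReal - Phi t| ≤ Δ)
    (σhat B : (Fin n → 𝒵) → ℝ) (hσhat : Measurable σhat) (hB : Measurable B)
    (hσhat0 : ∀ ω, 0 ≤ σhat ω)
    (z η γ : ℝ) (hz : 0 ≤ z) (hη : 0 ≤ η) (hγ : 0 ≤ γ) :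
    |((Measure.pi fun _ : Fin n => G)
          {ω | Real.sqrt n * z * σhat ω < (∑ i, ξ (ω i)) + n * B ω}).toReal
        - (1 - Phi z)| ≤
      Δ + ((Measure.pi fun _ : Fin n => G) {ω | η * σ < |σhat ω - σ|}).toReal
        + ((Measure.pi fun _ : Fin n => G)
            {ω | γ * σ < Real.sqrt n * |B ω + m|}).toReal
        + (η * z + γ) / Real.sqrt (2 * Real.pi) := by
  set P := (Measure.pi fun _ : Fin n => G) with hPdef
  have hprob : IsProbabilityMeasure P := by rw [hPdef]; infer_instance
  set c := Real.sqrt n with hcdef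
  have hcpos : 0 < c := Real.sqrt_pos.mpr (by exact_mod_cast hn)
  have hcc : c * c = (n : ℝ) := Real.mul_self_sqrt (Nat.cast_nonneg n)
  have hε0 : 0 ≤ η * z + γ := by positivity
  set A := {ω : Fin n → 𝒵 | c * z * σhat ω < (∑ i, ξ (ω i)) + n * B ω} with hAdef
  set E1 := {ω : Fin n → 𝒵 | η * σ < |σhat ω - σ|} with hE1def
  set E2 := {ω : Fin n → 𝒵 | γ * σ < c * |B ω + m|} with hE2def
  set T : ℝ → Set (Fin n → 𝒵) :=
    fun t => {ω : Fin n → 𝒵 | ((∑ i, ξ (ω i)) - n * m) / (c * σ) ≤ t} with hTdef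
  have hBE : ∀ t : ℝ, |(P (T t)).toReal - Phi t| ≤ Δ := fun t => hΔ t
  have hSm : Measurable (fun ω : Fin n → 𝒵 => ∑ i, ξ (ω i)) :=
    Finset.measurable_sum _ fun i _ => hξ.comp (measurable_pi_apply i)
  have hTm : ∀ t : ℝ, MeasurableSet (T t) := fun t =>
    measurableSet_le (((hSm.sub measurable_const).div_const _)) measurable_const
  -- pointwise inclusions
  have hsub1 : A ⊆ E1 ∪ E2 ∪ (T (z - (η * z + γ)))ᶜ := by
    intro ω hA
    by_cases h1 : ω ∈ E1
    · exact Or.inl (Or.inl h1)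
    by_cases h2 : ω ∈ E2
    · exact Or.inl (Or.inr h2)
    refine Or.inr ?_
    have h1' : |σhat ω - σ| ≤ η * σ := not_lt.1 h1
    have h2' : c * |B ω + m| ≤ γ * σ := not_lt.1 h2
    have hσhat1 : σ - η * σ ≤ σhat ω := by
      have := (abs_le.mp h1').1; linarith
    have hBm : (n : ℝ) * B ω + n * m ≤ c * γ * σ := by
      have h : |c * (B ω + m)| ≤ γ * σ := by
        rw [abs_mul, abs_of_nonneg hcpos.le]; exact h2'
      have h' := (abs_le.mp h).2
      have heq : (n : ℝ) * B ω + n * m = c * (c * (B ω + m)) := by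
        rw [← hcc]; ring
      rw [heq]
      calc c * (c * (B ω + m)) ≤ c * (γ * σ) :=
            mul_le_mul_of_nonneg_left h' hcpos.le
        _ = c * γ * σ := by ring
    have hAω : c * z * σhat ω < (∑ i, ξ (ω i)) + n * B ω := hA
    have hgoal : z - (η * z + γ) < ((∑ i, ξ (ω i)) - n * m) / (c * σ) := by
      rw [lt_div_iff₀ (by positivity)]
      have h4 : c * z * (σ - η * σ) ≤ c * z * σhat ω :=
        mul_le_mul_of_nonneg_left hσhat1 (by positivity)
      nlinarith [h4, hAω, hBm]
    exact fun hc' => absurd hc' (not_le.mpr hgoal)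
  have hsub2 : (T (z + (η * z + γ)))ᶜ ⊆ A ∪ E1 ∪ E2 := by
    intro ω hω
    by_cases h1 : ω ∈ E1
    · exact Or.inl (Or.inr h1)
    by_cases h2 : ω ∈ E2
    · exact Or.inr h2
    refine Or.inl (Or.inl ?_)
    have h1' : |σhat ω - σ| ≤ η * σ := not_lt.1 h1
    have h2' : c * |B ω + m| ≤ γ * σ := not_lt.1 h2
    have hσhat1 : σhat ω ≤ σ + η * σ := by
      have := (abs_le.mp h1').2; linarith
    have hBm : -(c * γ * σ) ≤ (n : ℝ) * B ω + n * m := by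
      have h : |c * (B ω + m)| ≤ γ * σ := by
        rw [abs_mul, abs_of_nonneg hcpos.le]; exact h2'
      have h' := (abs_le.mp h).1
      have heq : (n : ℝ) * B ω + n * m = c * (c * (B ω + m)) := by
        rw [← hcc]; ring
      rw [heq]
      calc -(c * γ * σ) = c * -(γ * σ) := by ring
        _ ≤ c * (c * (B ω + m)) := mul_le_mul_of_nonneg_left h' hcpos.le
    have hT : z + (η * z + γ) < ((∑ i, ξ (ω i)) - n * m) / (c * σ) :=
      not_le.1 (by exact hω)
    have hT' : (z + (η * z + γ)) * (c * σ) < (∑ i, ξ (ω i)) - n * m :=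
      (lt_div_iff₀ (by positivity)).1 hT
    show c * z * σhat ω < (∑ i, ξ (ω i)) + n * B ω
    have h4 : c * z * σhat ω ≤ c * z * (σ + η * σ) :=
      mul_le_mul_of_nonneg_left hσhat1 (by positivity)
    nlinarith [h4, hT', hBm]
  -- measure arithmetic
  have hfin : ∀ s : Set (Fin n → 𝒵), P s ≠ ⊤ := fun s => measure_ne_top P s
  have hcompl : ∀ t : ℝ, (P ((T t)ᶜ)).toReal = 1 - (P (T t)).toReal := by
    intro t
    have h := measure_add_measure_compl (μ := P) (hTm t)
    have h' : (P (T t)).toReal + (P ((T t)ᶜ)).toReal = 1 := by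
      rw [← ENNReal.toReal_add (hfin _) (hfin _), h]
      simp [measure_univ]
    linarith
  have hup : (P A).toReal
      ≤ (P E1).toReal + (P E2).toReal + (1 - (P (T (z - (η * z + γ)))).toReal) := by
    have h1 : P A ≤ P E1 + P E2 + P ((T (z - (η * z + γ)))ᶜ) :=
      le_trans (measure_mono hsub1)
        (le_trans (measure_union_le _ _)
          (add_le_add_left (measure_union_le _ _) _))
    have h2 := ENNReal.toReal_mono
      (by simp [ENNReal.add_ne_top, hfin]) h1
    rw [ENNReal.toReal_add (by simp [ENNReal.add_ne_top, hfin]) (hfin _),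
      ENNReal.toReal_add (hfin _) (hfin _), hcompl] at h2
    linarith
  have hlo : 1 - (P (T (z + (η * z + γ)))).toReal
      ≤ (P A).toReal + (P E1).toReal + (P E2).toReal := by
    have h1 : P ((T (z + (η * z + γ)))ᶜ) ≤ P A + P E1 + P E2 :=
      le_trans (measure_mono hsub2)
        (le_trans (measure_union_le _ _)
          (add_le_add_left (measure_union_le _ _) _))
    have h2 := ENNReal.toReal_mono
      (by simp [ENNReal.add_ne_top, hfin]) h1
    rw [ENNReal.toReal_add (by simp [ENNReal.add_ne_top, hfin]) (hfin _),
      ENNReal.toReal_add (hfin _) (hfin _), hcompl] at h2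
    linarith
  -- Berry–Esseen and Lipschitz bounds
  have hDa := abs_le.mp (hBE (z - (η * z + γ)))
  have hΔb := abs_le.mp (hBE (z + (η * z + γ)))
  have hLa : Phi z - Phi (z - (η * z + γ)) ≤ (η * z + γ) / Real.sqrt (2 * Real.pi) := by
    have := Phi_lipschitz' (show z - (η * z + γ) ≤ z by linarith)
    simpa using this
  have hLb : Phi (z + (η * z + γ)) - Phi z ≤ (η * z + γ) / Real.sqrt (2 * Real.pi) := by
    have := Phi_lipschitz' (show z ≤ z + (η * z + γ) by linarith)
    simpa using this
  rw [abs_le]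
  constructor
  · linarith [hΔb.1, hΔb.2, hlo, hLb]
  · linarith [hDa.1, hDa.2, hup, hLa]
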